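/- Let V and W be bounded antichain-decomposable persistence modules over ℝ^d. Then d_E(rk_V, rk_W) = sup_{I ∈ Seg} ℰ_{V,W}(I), and moreover ℰ_{V,W}(I) = 0 for every segment I not belonging to Seg_{V,W} ∪ Seg_{W,V}, so that d_E(rk_V, rk_W) = max( sup_{I ∈ Seg_{V,W}} ℰ_{V,W}(I), sup_{I ∈ Seg_{W,V}} ℰ_{V,W}(I) ), with suprema over the empty set equal to 0. -/

import Mathlib

open CategoryTheory CategoryTheory.Limits

noncomputable section

/-- Two elements `p q` of a subset `S` of a poset are order-connected in `S` if there is a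
finite sequence of elements of `S` from `p` to `q` with consecutive terms comparable. -/
def OrderConnIn {P : Type} [PartialOrder P] (S : Set P) (p q : P) : Prop :=
  p ∈ S ∧ Relation.ReflTransGen (fun a b => b ∈ S ∧ (a ≤ b ∨ b ≤ a)) p q

/-- A subset `S` of a poset is convex if `p ≤ r ≤ q` with `p, q ∈ S` implies `r ∈ S`. -/
def IsConvexSubset {P : Type} [PartialOrder P] (S : Set P) : Prop :=
  ∀ ⦃p r q : P⦄, p ∈ S → q ∈ S → p ≤ r → r ≤ q → r ∈ S

/-- An interval of a poset: a convex subset any two of whose elements are order-connected. -/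
def IsPosetInterval {P : Type} [PartialOrder P] (S : Set P) : Prop :=
  IsConvexSubset S ∧ ∀ p ∈ S, ∀ q ∈ S, OrderConnIn S p q

open Classical in
/-- The submodule of `F` which is everything at points of `I` and zero elsewhere. -/
def indSub (F : Type) [Field F] {P : Type} (I : Set P) (p : P) : Submodule F F :=
  if p ∈ I then ⊤ else ⊥

open Classical in
/-- The canonical map between submodules of `F`: the inclusion when it exists, zero otherwise. -/
def indMap (F : Type) [Field F] (S T : Submodule F F) : S →ₗ[F] T :=
  if h : S ≤ T then Submodule.inclusion h else 0

theorem indSub_subsingleton {F : Type} [Field F] {P : Type} {I : Set P} {p : P}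
    (hp : p ∉ I) : Subsingleton (indSub F I p) := by
  rw [indSub, if_neg hp]
  infer_instance

theorem indMap_comp (F : Type) [Field F] {P : Type} [PartialOrder P] {I : Set P}
    (hI : IsConvexSubset I) {p q r : P} (hpq : p ≤ q) (hqr : q ≤ r) :
    (indMap F (indSub F I q) (indSub F I r)).comp (indMap F (indSub F I p) (indSub F I q))
      = indMap F (indSub F I p) (indSub F I r) := by
  by_cases hp : p ∈ I
  · by_cases hr : r ∈ I
    · have hq : q ∈ I := hI hp hr hpq hqr
      have h1 : indSub F I p ≤ indSub F I q := by simp [indSub, hp, hq]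
      have h2 : indSub F I q ≤ indSub F I r := by simp [indSub, hq, hr]
      have h3 : indSub F I p ≤ indSub F I r := h1.trans h2
      simp only [indMap, dif_pos h1, dif_pos h2, dif_pos h3]
      ext x
      rfl
    · haveI := indSub_subsingleton (F := F) (I := I) hr
      exact LinearMap.ext fun x => Subsingleton.elim _ _
  · haveI := indSub_subsingleton (F := F) (I := I) hp
    apply LinearMap.ext
    intro x
    rw [Subsingleton.elim x 0]
    simp

/-- The indicator persistence module of a convex subset `I` of a poset `P`: it assigns `F` to
points of `I` and `0` to other points, with identity structure maps between points of `I` and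
zero maps otherwise. -/
def indicatorModule (F : Type) [Field F] {P : Type} [PartialOrder P] (I : Set P)
    (hI : IsConvexSubset I) : P ⥤ ModuleCat.{0} F where
  obj p := ModuleCat.of F (indSub F I p)
  map {p q} f := ModuleCat.ofHom (indMap F (indSub F I p) (indSub F I q))
  map_id p := by
    ext x
    simp only [indMap, dif_pos le_rfl]
    rfl
  map_comp {p q r} f g := by
    rw [← ModuleCat.ofHom_comp, indMap_comp F hI f.le g.le]

/-- The support of a persistence module: the points where it is nonzero. -/
def suppMod (F : Type) [Field F] {P : Type} [PartialOrder P] (V : P ⥤ ModuleCat.{0} F) :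
    Set P := {p | Nontrivial (V.obj p)}

/-- The rank of the structure map of `V` associated to `p ≤ q`. -/
def rankMap (F : Type) [Field F] {P : Type} [PartialOrder P] (V : P ⥤ ModuleCat.{0} F)
    {p q : P} (h : p ≤ q) : ℕ :=
  Module.finrank F (LinearMap.range (V.map (homOfLE h)).hom)

/-- A persistence module is antichain-decomposable if it is isomorphic to a direct sum of
indicator modules of intervals whose elements are pairwise incomparable across distinct
summands. -/
def IsACD (F : Type) [Field F] {P : Type} [PartialOrder P] (V : P ⥤ ModuleCat.{0} F) : Prop :=
  ∃ (A : Type) (S : A → Set P) (hS : ∀ α, IsPosetInterval (S α)),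
    (∀ ⦃α β : A⦄, α ≠ β → ∀ p ∈ S α, ∀ q ∈ S β, ¬ p ≤ q ∧ ¬ q ≤ p) ∧
    Nonempty (V ≅ ∐ fun α => indicatorModule F (S α) (hS α).1)

/-- A persistence module is thin if it is pointwise of dimension `0` or `1`. -/
def IsThin (F : Type) [Field F] {P : Type} [PartialOrder P] (V : P ⥤ ModuleCat.{0} F) : Prop :=
  ∀ p : P, Module.rank F (V.obj p) = 0 ∨ Module.rank F (V.obj p) = 1

/-- We regard `ℝ^d` (with the product order) as a poset category. -/
instance (d : ℕ) : CategoryTheory.Category (Fin d → ℝ) := Preorder.smallCategory _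

open Classical in
/-- The rank invariant of `V` on the segment `[p, q]` (junk value `0` when `¬ p ≤ q`). -/
def rkInv (F : Type) [Field F] {d : ℕ} (V : (Fin d → ℝ) ⥤ ModuleCat.{0} F)
    (p q : Fin d → ℝ) : ℕ :=
  if h : p ≤ q then Module.finrank F (LinearMap.range (V.map (homOfLE h)).hom) else 0

/-- The rank invariant of `V` on the `ε`-thickening `[p - ε𝟙, q + ε𝟙]` of the segment `[p, q]`. -/
def rkShift (F : Type) [Field F] {d : ℕ} (V : (Fin d → ℝ) ⥤ ModuleCat.{0} F) (ε : ℝ)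
    (p q : Fin d → ℝ) : ℕ :=
  rkInv F V (fun i => p i - ε) (fun i => q i + ε)

/-- `ε` is a feasible erosion for the pair `(rk_V, rk_W)`: for every segment `[p, q]`,
`rk_V([p, q]^{+ε}) ≤ rk_W([p, q])` and `rk_W([p, q]^{+ε}) ≤ rk_V([p, q])`. -/
def Feasible (F : Type) [Field F] {d : ℕ} (V W : (Fin d → ℝ) ⥤ ModuleCat.{0} F) (ε : ℝ) :
    Prop :=
  ∀ p q : Fin d → ℝ, p ≤ q →
    rkShift F V ε p q ≤ rkInv F W p q ∧ rkShift F W ε p q ≤ rkInv F V p q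

/-- The erosion distance between the rank invariants of `V` and `W`. -/
def erosionDist (F : Type) [Field F] {d : ℕ} (V W : (Fin d → ℝ) ⥤ ModuleCat.{0} F) : ℝ :=
  sInf {ε : ℝ | 0 < ε ∧ Feasible F V W ε}

/-- `ℰ_{V,W}(I)` for the segment `I = [p, q]`. -/
def erosionPair (F : Type) [Field F] {d : ℕ} (V W : (Fin d → ℝ) ⥤ ModuleCat.{0} F)
    (p q : Fin d → ℝ) : ℝ :=
  sInf {ε : ℝ | 0 < ε ∧ rkShift F V ε p q ≤ rkInv F W p q ∧ rkShift F W ε p q ≤ rkInv F V p q}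

/-- `ℰ_V(I)` for the segment `I = [p, q]`. -/
def erosionOne (F : Type) [Field F] {d : ℕ} (V : (Fin d → ℝ) ⥤ ModuleCat.{0} F)
    (p q : Fin d → ℝ) : ℝ :=
  sInf {ε : ℝ | 0 < ε ∧ rkShift F V ε p q = 0}

/-- The segment `[p, q]` belongs to `Seg_{V,W}`, i.e. `rk_V([p, q]) = 1` and
`rk_W([p, q]) = 0`. -/
def SegMem (F : Type) [Field F] {d : ℕ} (V W : (Fin d → ℝ) ⥤ ModuleCat.{0} F)
    (p q : Fin d → ℝ) : Prop :=
  p ≤ q ∧ rkInv F V p q = 1 ∧ rkInv F W p q = 0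

/-- `V(u) ≅ F`. -/
def ptIsLine (F : Type) [Field F] {d : ℕ} (V : (Fin d → ℝ) ⥤ ModuleCat.{0} F)
    (u : Fin d → ℝ) : Prop :=
  Nonempty ((V.obj u) ≃ₗ[F] F)

/-- `ℝ^d_{V,W} = {u ∈ ℝ^d : V(u) ≅ F and W(u) = 0}`. -/
def RVW (F : Type) [Field F] {d : ℕ} (V W : (Fin d → ℝ) ⥤ ModuleCat.{0} F) :
    Set (Fin d → ℝ) :=
  {u | ptIsLine F V u ∧ Subsingleton (W.obj u)}

/-- `ℝ^d_V = {u ∈ ℝ^d : V(u) ≅ F}`. -/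
def RV (F : Type) [Field F] {d : ℕ} (V : (Fin d → ℝ) ⥤ ModuleCat.{0} F) :
    Set (Fin d → ℝ) :=
  {u | ptIsLine F V u}

/-- `ℰ^small_V(p) = sup_{q ≥ p} ℰ_V([p, q])`. -/
def erosionSmall (F : Type) [Field F] {d : ℕ} (V : (Fin d → ℝ) ⥤ ModuleCat.{0} F)
    (p : Fin d → ℝ) : ℝ :=
  sSup {x : ℝ | ∃ q : Fin d → ℝ, p ≤ q ∧ x = erosionOne F V p q}

/-- `ℰ^large_V(q) = sup_{p ≤ q} ℰ_V([p, q])`. -/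
def erosionLarge (F : Type) [Field F] {d : ℕ} (V : (Fin d → ℝ) ⥤ ModuleCat.{0} F)
    (q : Fin d → ℝ) : ℝ :=
  sSup {x : ℝ | ∃ p : Fin d → ℝ, p ≤ q ∧ x = erosionOne F V p q}

/-- `ℰ*(V, W) = max( sup_{p ∈ ℝ^d_{V,W}} ℰ^small_V(p), sup_{q ∈ ℝ^d_{V,W}} ℰ^large_V(q) )`. -/
def erosionStar (F : Type) [Field F] {d : ℕ} (V W : (Fin d → ℝ) ⥤ ModuleCat.{0} F) : ℝ :=
  max (sSup {x : ℝ | ∃ p ∈ RVW F V W, x = erosionSmall F V p})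
      (sSup {x : ℝ | ∃ q ∈ RVW F V W, x = erosionLarge F V q})

/-- A bounded antichain-decomposable module over `ℝ^d`: an ACD module whose support is a
bounded subset of `ℝ^d`. -/
def IsBoundedACD (F : Type) [Field F] {d : ℕ} (V : (Fin d → ℝ) ⥤ ModuleCat.{0} F) : Prop :=
  IsACD F V ∧ Bornology.IsBounded (suppMod F V)


section ErosionHelpers

variable {F : Type} [Field F] {d : ℕ}

theorem acd_pointwise {V : (Fin d → ℝ) ⥤ ModuleCat.{0} F}
    (h : IsACD F V) (p : Fin d → ℝ) :
    Module.Finite F (V.obj p) ∧ Module.finrank F (V.obj p) ≤ 1 := by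
  classical
  obtain ⟨A, S, hS, hinc, ⟨e⟩⟩ := h
  set G : A → ((Fin d → ℝ) ⥤ ModuleCat.{0} F) := fun α => indicatorModule F (S α) (hS α).1 with hG
  let E := (CategoryTheory.evaluation (Fin d → ℝ) (ModuleCat.{0} F)).obj p
  let e1 : (V.obj p) ≃ₗ[F] ((∐ G).obj p) := (e.app p).toLinearEquiv
  let e2 : ((∐ G).obj p) ≃ₗ[F] (∐ fun α => E.obj (G α) : ModuleCat.{0} F) :=
    (PreservesCoproduct.iso E G).toLinearEquiv
  let e3 : (∐ fun α => E.obj (G α) : ModuleCat.{0} F) ≃ₗ[F] (DirectSum A fun α => ↥(indSub F (S α) p)) :=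
    (ModuleCat.coprodIsoDirectSum (fun α => E.obj (G α))).toLinearEquiv
  have eq := (e1.trans (e2.trans e3))
  have hfin : Module.Finite F (DirectSum A fun α => ↥(indSub F (S α) p)) ∧
      Module.finrank F (DirectSum A fun α => ↥(indSub F (S α) p)) ≤ 1 := by
    by_cases hex : ∃ α₀, p ∈ S α₀
    · obtain ⟨α₀, hα₀⟩ := hex
      have hsub : ∀ α, α ≠ α₀ → Subsingleton ↥(indSub F (S α) p) := by
        intro α hne
        apply indSub_subsingleton
        intro hp
        exact ((hinc hne p hp p hα₀).1 le_rfl)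
      set π := DirectSum.component F A (fun α => ↥(indSub F (S α) p)) α₀ with hπ
      have hinj : Function.Injective π := by
        intro x y hxy
        refine DFinsupp.ext fun α => ?_
        by_cases hα : α = α₀
        · subst hα; exact hxy
        · exact @Subsingleton.elim _ (hsub α hα) _ _
      constructor
      · exact Module.Finite.of_injective π hinj
      · calc Module.finrank F (DirectSum A fun α => ↥(indSub F (S α) p))
            ≤ Module.finrank F ↥(indSub F (S α₀) p) :=
              LinearMap.finrank_le_finrank_of_injective hinj
          _ ≤ Module.finrank F F := Submodule.finrank_le _
          _ = 1 := Module.finrank_self F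
    · push_neg at hex
      have hsub : ∀ α, Subsingleton ↥(indSub F (S α) p) :=
        fun α => indSub_subsingleton (hex α)
      have : Subsingleton (DirectSum A fun α => ↥(indSub F (S α) p)) :=
        ⟨fun a b => DFinsupp.ext fun α => @Subsingleton.elim _ (hsub α) _ _⟩
      refine ⟨?_, ?_⟩
      · have hinj : Function.Injective
            (0 : (DirectSum A fun α => ↥(indSub F (S α) p)) →ₗ[F] F) :=
          fun a b _ => Subsingleton.elim a b
        exact Module.Finite.of_injective _ hinj
      · rw [Module.finrank_zero_of_subsingleton]
        exact Nat.zero_le 1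
  refine ⟨?_, ?_⟩
  · have := hfin.1
    exact Module.Finite.equiv eq.symm
  · rw [eq.finrank_eq]; exact hfin.2

theorem rkInv_le_one {V : (Fin d → ℝ) ⥤ ModuleCat.{0} F}
    (hthin : ∀ x, Module.Finite F (V.obj x) ∧ Module.finrank F (V.obj x) ≤ 1)
    (p q : Fin d → ℝ) : rkInv F V p q ≤ 1 := by
  rw [rkInv]
  split
  · have := (hthin q).1
    exact le_trans (Submodule.finrank_le _) (hthin q).2
  · exact Nat.zero_le 1

theorem rkInv_mono {V : (Fin d → ℝ) ⥤ ModuleCat.{0} F}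
    (hthin : ∀ x, Module.Finite F (V.obj x) ∧ Module.finrank F (V.obj x) ≤ 1)
    {p' p q q' : Fin d → ℝ} (h1 : p' ≤ p) (h : p ≤ q) (h2 : q ≤ q') :
    rkInv F V p' q' ≤ rkInv F V p q := by
  have h' : p' ≤ q' := le_trans h1 (le_trans h h2)
  rw [rkInv, dif_pos h', rkInv, dif_pos h]
  have hmap : V.map (homOfLE h') =
      V.map (homOfLE h1) ≫ V.map (homOfLE h) ≫ V.map (homOfLE h2) := by
    rw [← V.map_comp, ← V.map_comp]
    exact congrArg V.map (Subsingleton.elim _ _)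
  rw [hmap]
  have hfq := (hthin q).1
  have hfq' := (hthin q').1
  by_cases hm : LinearMap.range (V.map (homOfLE h)).hom = ⊥
  · have hz : V.map (homOfLE h) = 0 :=
      ModuleCat.hom_ext (by simpa using LinearMap.range_eq_bot.mp hm)
    rw [hz]
    have hcz : V.map (homOfLE h1) ≫ (0 : V.obj p ⟶ V.obj q) ≫ V.map (homOfLE h2)
        = (0 : V.obj p' ⟶ V.obj q') := by simp
    rw [hcz]
    have : LinearMap.range (0 : V.obj p' ⟶ V.obj q').hom = ⊥ := by simp
    rw [this, finrank_bot]
    exact Nat.zero_le _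
  · have h1le : 1 ≤ Module.finrank F (LinearMap.range (V.map (homOfLE h)).hom) := by
      rcases Nat.eq_zero_or_pos
          (Module.finrank F (LinearMap.range (V.map (homOfLE h)).hom)) with h0 | h0
      · exact absurd (Submodule.finrank_eq_zero.mp h0) hm
      · exact h0
    calc Module.finrank F
          (LinearMap.range (V.map (homOfLE h1) ≫ V.map (homOfLE h) ≫ V.map (homOfLE h2)).hom)
        ≤ Module.finrank F (V.obj q') := Submodule.finrank_le _
      _ ≤ 1 := (hthin q').2
      _ ≤ _ := h1le

theorem rkShift_le_rkInv {V : (Fin d → ℝ) ⥤ ModuleCat.{0} F}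
    (hthin : ∀ x, Module.Finite F (V.obj x) ∧ Module.finrank F (V.obj x) ≤ 1)
    {ε : ℝ} (hε : 0 ≤ ε) {p q : Fin d → ℝ} (hpq : p ≤ q) :
    rkShift F V ε p q ≤ rkInv F V p q := by
  refine rkInv_mono hthin (fun i => ?_) hpq (fun i => ?_) <;> dsimp <;> linarith

theorem rkShift_mono {V : (Fin d → ℝ) ⥤ ModuleCat.{0} F}
    (hthin : ∀ x, Module.Finite F (V.obj x) ∧ Module.finrank F (V.obj x) ≤ 1)
    {ε ε' : ℝ} (hε : 0 ≤ ε) (hee : ε ≤ ε') {p q : Fin d → ℝ} (hpq : p ≤ q) :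
    rkShift F V ε' p q ≤ rkShift F V ε p q := by
  have hmid : (fun i => p i - ε) ≤ (fun i => q i + ε) := by
    intro i; dsimp; have := hpq i; linarith
  refine rkInv_mono hthin (fun i => ?_) hmid (fun i => ?_) <;> dsimp <;> linarith

theorem rkInv_zero_left {V : (Fin d → ℝ) ⥤ ModuleCat.{0} F} {p q : Fin d → ℝ}
    (hsub : Subsingleton (V.obj p)) : rkInv F V p q = 0 := by
  rw [rkInv]
  split
  · have hz : V.map (homOfLE (by assumption : p ≤ q)) = 0 := by
      apply ModuleCat.hom_ext
      apply LinearMap.ext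
      intro v
      rw [Subsingleton.elim v 0]
      simp
    rw [hz]
    have : LinearMap.range (0 : V.obj p ⟶ V.obj q).hom = ⊥ := by simp
    rw [this, finrank_bot]
  · rfl

theorem rkInv_zero_right {V : (Fin d → ℝ) ⥤ ModuleCat.{0} F} {p q : Fin d → ℝ}
    (hsub : Subsingleton (V.obj q)) : rkInv F V p q = 0 := by
  rw [rkInv]
  split
  · have : LinearMap.range (V.map (homOfLE (by assumption : p ≤ q))).hom = ⊥ :=
      (Submodule.eq_bot_iff _).mpr fun x _ => Subsingleton.elim x 0
    rw [this, finrank_bot]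
  · rfl

theorem rkShift_vanish {V : (Fin d → ℝ) ⥤ ModuleCat.{0} F}
    (hb : Bornology.IsBounded (suppMod F V)) (hne : Nonempty (Fin d)) :
    ∃ R : ℝ, 0 ≤ R ∧ ∀ ε, R < ε → ∀ p q : Fin d → ℝ, p ≤ q → rkShift F V ε p q = 0 := by
  obtain ⟨r, hr⟩ := hb.subset_closedBall 0
  refine ⟨max r 0, le_max_right r 0, ?_⟩
  intro ε hε p q hpq
  by_cases h1 : Nontrivial (V.obj (fun i => p i - ε))
  · by_cases h2 : Nontrivial (V.obj (fun i => q i + ε))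
    · exfalso
      have m1 : (fun i => p i - ε) ∈ Metric.closedBall (0 : Fin d → ℝ) r :=
        hr (show _ ∈ suppMod F V from h1)
      have m2 : (fun i => q i + ε) ∈ Metric.closedBall (0 : Fin d → ℝ) r :=
        hr (show _ ∈ suppMod F V from h2)
      have hr0 : 0 ≤ r := le_trans dist_nonneg (Metric.mem_closedBall.mp m1)
      obtain ⟨i⟩ := hne
      have b1 := (dist_pi_le_iff hr0).mp (Metric.mem_closedBall.mp m1) i
      have b2 := (dist_pi_le_iff hr0).mp (Metric.mem_closedBall.mp m2) i
      simp only [Pi.zero_apply, Real.dist_eq, sub_zero] at b1 b2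
      rw [abs_le] at b1 b2
      have hi := hpq i
      have hεr : ε ≤ r := by linarith [b1.1, b2.2]
      have : ε ≤ max r 0 := le_trans hεr (le_max_left r 0)
      linarith
    · exact rkInv_zero_right (not_nontrivial_iff_subsingleton.mp h2)
  · exact rkInv_zero_left (not_nontrivial_iff_subsingleton.mp h1)

end ErosionHelpers

/-- for bounded ACD modules over `ℝ^d`, the erosion distance is the supremum of
`ℰ_{V,W}` over all segments; `ℰ_{V,W}` vanishes on segments outside `Seg_{V,W} ∪ Seg_{W,V}`;
hence the erosion distance is the maximum of the suprema of `ℰ_{V,W}` over `Seg_{V,W}` and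
over `Seg_{W,V}`. -/
theorem erosion_dist_sup_characterization (F : Type) [Field F] {d : ℕ}
    (V W : (Fin d → ℝ) ⥤ ModuleCat.{0} F)
    (hV : IsBoundedACD F V) (hW : IsBoundedACD F W) :
    erosionDist F V W =
      sSup {x : ℝ | ∃ p q : Fin d → ℝ, p ≤ q ∧ x = erosionPair F V W p q} ∧
    (∀ p q : Fin d → ℝ, p ≤ q → ¬ SegMem F V W p q → ¬ SegMem F W V p q →
      erosionPair F V W p q = 0) ∧
    erosionDist F V W =
      max (sSup {x : ℝ | ∃ p q : Fin d → ℝ, SegMem F V W p q ∧ x = erosionPair F V W p q})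
          (sSup {x : ℝ | ∃ p q : Fin d → ℝ, SegMem F W V p q ∧ x = erosionPair F V W p q}) := by
  classical
  obtain ⟨hVacd, hVb⟩ := hV
  obtain ⟨hWacd, hWb⟩ := hW
  have thinV := fun x => acd_pointwise hVacd x
  have thinW := fun x => acd_pointwise hWacd x
  by_cases hd : Nonempty (Fin d)
  · -- main case d ≥ 1
    obtain ⟨RV, hRV0, hRV⟩ := rkShift_vanish hVb hd
    obtain ⟨RW, hRW0, hRW⟩ := rkShift_vanish hWb hd
    set R := max RV RW with hR
    have hR0 : 0 ≤ R := le_trans hRV0 (le_max_left _ _)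
    set C : (Fin d → ℝ) → (Fin d → ℝ) → Set ℝ := fun p q =>
      {ε : ℝ | 0 < ε ∧ rkShift F V ε p q ≤ rkInv F W p q ∧ rkShift F W ε p q ≤ rkInv F V p q}
      with hCdef
    have hEPdef : ∀ p q, erosionPair F V W p q = sInf (C p q) := fun _ _ => rfl
    have hCbdd : ∀ p q, BddBelow (C p q) := fun p q => ⟨0, fun x hx => hx.1.le⟩
    have hCmem : ∀ p q, p ≤ q → ∀ ε, R < ε → ε ∈ C p q := by
      intro p q hpq ε hε
      refine ⟨lt_of_le_of_lt hR0 hε, ?_, ?_⟩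
      · rw [hRV ε (lt_of_le_of_lt (le_max_left _ _) hε) p q hpq]; exact Nat.zero_le _
      · rw [hRW ε (lt_of_le_of_lt (le_max_right _ _) hε) p q hpq]; exact Nat.zero_le _
    have hCne : ∀ p q, p ≤ q → (C p q).Nonempty :=
      fun p q hpq => ⟨R + 1, hCmem p q hpq (R + 1) (lt_add_one R)⟩
    have hCmono : ∀ p q, p ≤ q → ∀ ε ε', ε ∈ C p q → ε ≤ ε' → ε' ∈ C p q := by
      rintro p q hpq ε ε' ⟨hε, hc1, hc2⟩ hee
      exact ⟨lt_of_lt_of_le hε hee,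
        le_trans (rkShift_mono thinV hε.le hee hpq) hc1,
        le_trans (rkShift_mono thinW hε.le hee hpq) hc2⟩
    have hEP0 : ∀ p q, 0 ≤ erosionPair F V W p q := by
      intro p q
      rw [hEPdef]
      exact Real.sInf_nonneg (fun x hx => hx.1.le)
    have hEPle : ∀ p q, p ≤ q → erosionPair F V W p q ≤ R + 1 := by
      intro p q hpq
      rw [hEPdef]
      exact csInf_le (hCbdd p q) (hCmem p q hpq (R + 1) (lt_add_one R))
    set T : Set ℝ := {x : ℝ | ∃ p q : Fin d → ℝ, p ≤ q ∧ x = erosionPair F V W p q} with hTdef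
    have hTne : T.Nonempty :=
      ⟨erosionPair F V W (fun _ => 0) (fun _ => 0), (fun _ => 0), (fun _ => 0), le_refl _, rfl⟩
    have hTbdd : BddAbove T := by
      refine ⟨R + 1, ?_⟩
      rintro x ⟨p, q, hpq, rfl⟩
      exact hEPle p q hpq
    have hsupT0 : 0 ≤ sSup T := by
      refine Real.sSup_nonneg ?_
      rintro x ⟨p, q, hpq, rfl⟩
      exact hEP0 p q
    have hSDne : ({ε : ℝ | 0 < ε ∧ Feasible F V W ε}).Nonempty := by
      refine ⟨R + 1, lt_of_le_of_lt hR0 (lt_add_one R), ?_⟩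
      intro p q hpq
      exact (hCmem p q hpq (R + 1) (lt_add_one R)).2
    have part1 : erosionDist F V W = sSup T := by
      apply le_antisymm
      · have key : ∀ δ : ℝ, 0 < δ → erosionDist F V W ≤ sSup T + δ := by
          intro δ hδ
          have hmem : (sSup T + δ) ∈ {ε : ℝ | 0 < ε ∧ Feasible F V W ε} := by
            refine ⟨by linarith, ?_⟩
            intro p q hpq
            have h1 : erosionPair F V W p q ≤ sSup T := le_csSup hTbdd ⟨p, q, hpq, rfl⟩
            have h2 : sInf (C p q) < sSup T + δ := by
              rw [← hEPdef]; linarith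
            obtain ⟨ε₀, hε₀, hlt⟩ := exists_lt_of_csInf_lt (hCne p q hpq) h2
            exact (hCmono p q hpq ε₀ _ hε₀ hlt.le).2
          exact csInf_le ⟨0, fun x hx => hx.1.le⟩ hmem
        exact le_of_forall_pos_le_add key
      · apply csSup_le hTne
        rintro x ⟨p, q, hpq, rfl⟩
        rw [hEPdef]
        exact csInf_le_csInf (hCbdd p q) hSDne (fun ε hε => ⟨hε.1, hε.2 p q hpq⟩)
    have part2 : ∀ p q : Fin d → ℝ, p ≤ q → ¬ SegMem F V W p q → ¬ SegMem F W V p q →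
        erosionPair F V W p q = 0 := by
      intro p q hpq hn1 hn2
      have hv := rkInv_le_one thinV p q
      have hw := rkInv_le_one thinW p q
      have heq : rkInv F V p q = rkInv F W p q := by
        by_contra hne
        have ha : rkInv F V p q = 0 ∨ rkInv F V p q = 1 := by omega
        have hb : rkInv F W p q = 0 ∨ rkInv F W p q = 1 := by omega
        rcases ha with ha | ha <;> rcases hb with hb | hb
        · exact hne (ha.trans hb.symm)
        · exact hn2 ⟨hpq, hb, ha⟩
        · exact hn1 ⟨hpq, ha, hb⟩
        · exact hne (ha.trans hb.symm)
      have hsub2 : Set.Ioi (0 : ℝ) ⊆ C p q := by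
        intro ε hε
        refine ⟨hε, ?_, ?_⟩
        · exact le_trans (rkShift_le_rkInv thinV (le_of_lt hε) hpq) (le_of_eq heq)
        · exact le_trans (rkShift_le_rkInv thinW (le_of_lt hε) hpq) (le_of_eq heq.symm)
      apply le_antisymm
      · apply le_of_forall_pos_le_add
        intro δ hδ
        rw [hEPdef, zero_add]
        exact csInf_le (hCbdd p q) (hsub2 hδ)
      · exact hEP0 p q
    refine ⟨part1, part2, ?_⟩
    set A : Set ℝ :=
      {x : ℝ | ∃ p q : Fin d → ℝ, SegMem F V W p q ∧ x = erosionPair F V W p q} with hAdef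
    set B : Set ℝ :=
      {x : ℝ | ∃ p q : Fin d → ℝ, SegMem F W V p q ∧ x = erosionPair F V W p q} with hBdef
    have hAsub : A ⊆ T := by
      rintro x ⟨p, q, hs, rfl⟩
      exact ⟨p, q, hs.1, rfl⟩
    have hBsub : B ⊆ T := by
      rintro x ⟨p, q, hs, rfl⟩
      exact ⟨p, q, hs.1, rfl⟩
    have hA0 : 0 ≤ sSup A := by
      refine Real.sSup_nonneg ?_
      rintro x ⟨p, q, hs, rfl⟩
      exact hEP0 p q
    rw [part1]
    apply le_antisymm
    · apply csSup_le hTne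
      rintro x ⟨p, q, hpq, rfl⟩
      by_cases h1 : SegMem F V W p q
      · exact le_max_of_le_left (le_csSup (hTbdd.mono hAsub) ⟨p, q, h1, rfl⟩)
      by_cases h2 : SegMem F W V p q
      · exact le_max_of_le_right (le_csSup (hTbdd.mono hBsub) ⟨p, q, h2, rfl⟩)
      · rw [part2 p q hpq h1 h2]
        exact le_max_of_le_left hA0
    · apply max_le
      · by_cases hA : A.Nonempty
        · exact csSup_le_csSup hTbdd hA hAsub
        · rw [Set.not_nonempty_iff_eq_empty.mp hA, Real.sSup_empty]
          exact hsupT0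
      · by_cases hB : B.Nonempty
        · exact csSup_le_csSup hTbdd hB hBsub
        · rw [Set.not_nonempty_iff_eq_empty.mp hB, Real.sSup_empty]
          exact hsupT0
  · -- degenerate case d = 0
    have hsub : ∀ x y : Fin d → ℝ, x = y := fun x y => funext fun i => absurd ⟨i⟩ hd
    have hall : ∀ p q : Fin d → ℝ, p ≤ q := fun p q => le_of_eq (hsub p q)
    have hshift : ∀ (U : (Fin d → ℝ) ⥤ ModuleCat.{0} F) (ε : ℝ) (p q : Fin d → ℝ),
        rkShift F U ε p q = rkInv F U p q := by
      intro U ε p q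
      rw [rkShift, hsub (fun i => p i - ε) p, hsub (fun i => q i + ε) q]
    set c : Fin d → ℝ := fun _ => 0 with hc
    have hEP : ∀ p q : Fin d → ℝ, erosionPair F V W p q = 0 := by
      intro p q
      rw [erosionPair]
      by_cases hP : rkInv F V p q ≤ rkInv F W p q ∧ rkInv F W p q ≤ rkInv F V p q
      · have hset : {ε : ℝ | 0 < ε ∧ rkShift F V ε p q ≤ rkInv F W p q ∧
            rkShift F W ε p q ≤ rkInv F V p q} = Set.Ioi 0 := by
          ext ε
          simp only [Set.mem_setOf_eq, Set.mem_Ioi, hshift, hP.1, hP.2, and_true]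
        rw [hset, csInf_Ioi]
      · have hset : {ε : ℝ | 0 < ε ∧ rkShift F V ε p q ≤ rkInv F W p q ∧
            rkShift F W ε p q ≤ rkInv F V p q} = ∅ := by
          ext ε
          simp only [Set.mem_setOf_eq, Set.mem_empty_iff_false, iff_false, not_and]
          intro _ h
          rw [hshift] at h
          intro h2
          rw [hshift] at h2
          exact hP ⟨h, h2⟩
        rw [hset, Real.sInf_empty]
    have hED : erosionDist F V W = 0 := by
      rw [erosionDist]
      by_cases hP : rkInv F V c c ≤ rkInv F W c c ∧ rkInv F W c c ≤ rkInv F V c c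
      · have hset : {ε : ℝ | 0 < ε ∧ Feasible F V W ε} = Set.Ioi 0 := by
          ext ε
          simp only [Set.mem_setOf_eq, Set.mem_Ioi]
          constructor
          · exact fun h => h.1
          · intro hε
            refine ⟨hε, ?_⟩
            intro p q hpq
            rw [hshift, hshift, hsub p c, hsub q c]
            exact hP
        rw [hset, csInf_Ioi]
      · have hset : {ε : ℝ | 0 < ε ∧ Feasible F V W ε} = ∅ := by
          ext ε
          simp only [Set.mem_setOf_eq, Set.mem_empty_iff_false, iff_false, not_and]
          intro _ hF
          have := hF c c (hall c c)
          rw [hshift, hshift] at this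
          exact hP this
        rw [hset, Real.sInf_empty]
    have hz : ∀ s : Set ℝ, s ⊆ {(0 : ℝ)} → sSup s = 0 := by
      intro s hs
      rcases Set.subset_singleton_iff_eq.mp hs with rfl | rfl
      · exact Real.sSup_empty
      · exact csSup_singleton 0
    refine ⟨?_, fun p q _ _ _ => hEP p q, ?_⟩
    · rw [hED]
      symm
      have hTsing : {x : ℝ | ∃ p q : Fin d → ℝ, p ≤ q ∧ x = erosionPair F V W p q}
          = {(0 : ℝ)} := by
        ext x
        simp only [Set.mem_setOf_eq, Set.mem_singleton_iff]
        constructor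
        · rintro ⟨p, q, hpq, rfl⟩
          exact hEP p q
        · rintro rfl
          exact ⟨c, c, hall c c, (hEP c c).symm⟩
      rw [hTsing, csSup_singleton]
    · rw [hED]
      symm
      have ha : sSup {x : ℝ | ∃ p q : Fin d → ℝ, SegMem F V W p q ∧
          x = erosionPair F V W p q} = 0 := by
        apply hz
        rintro x ⟨p, q, hs, rfl⟩
        exact hEP p q
      have hb : sSup {x : ℝ | ∃ p q : Fin d → ℝ, SegMem F W V p q ∧
          x = erosionPair F V W p q} = 0 := by
        apply hz
        rintro x ⟨p, q, hs, rfl⟩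
        exact hEP p q
      rw [ha, hb, max_self]

end
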